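/- For every sequence (c_n)_{n≥1} of positive integers there exists a sequence (b_n)_{n≥1} of positive integers such that the series ∑_{i≥1} h_2^{(i)} / (b_i b_{i-1} ⋯ b_1) converges, where the sequences (h_1^{(n)}) and (h_2^{(n)}) are defined by h_1^{(1)} = h_2^{(1)} = 1, h_1^{(n+1)} = b_n h_1^{(n)} + h_2^{(n)}, and h_2^{(n+1)} = c_n h_2^{(n)} + h_1^{(n)} for n ≥ 1. -/

import Mathlib

open Filter

/-- Auxiliary recursion: `Haux c n = (h1 n, h2 n)` where `b n = 2^n * h2 n`. -/
def Haux (c : ℕ → ℕ) : ℕ → ℕ × ℕ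
  | 0 => (1, 1)
  | 1 => (1, 1)
  | (n + 2) =>
    let p := Haux c (n + 1)
    (2 ^ (n + 1) * p.2 * p.1 + p.2, c (n + 1) * p.2 + p.1)

lemma Haux_pos (c : ℕ → ℕ) : ∀ n, 0 < (Haux c n).1 ∧ 0 < (Haux c n).2
  | 0 => by simp [Haux]
  | 1 => by simp [Haux]
  | (n + 2) => by
    have ih := Haux_pos c (n + 1)
    simp only [Haux]
    exact ⟨Nat.add_pos_right _ ih.2, Nat.add_pos_right _ ih.1⟩

/-- For every sequence `(c_n)` of positive integers there is a
sequence `(b_n)` of positive integers such that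
`∑_{i≥1} h_2^{(i)} / (b_i ⋯ b_1)` converges, where `h_1^{(1)} = h_2^{(1)} = 1`,
`h_1^{(n+1)} = b_n h_1^{(n)} + h_2^{(n)}` and `h_2^{(n+1)} = c_n h_2^{(n)} + h_1^{(n)}`. -/
theorem stmt19 (c : ℕ → ℕ) (hc : ∀ n, 0 < c n) :
    ∃ b : ℕ → ℕ, (∀ n, 0 < b n) ∧
      ∃ h1 h2 : ℕ → ℕ,
        h1 1 = 1 ∧ h2 1 = 1 ∧
        (∀ n, 1 ≤ n → h1 (n + 1) = b n * h1 n + h2 n ∧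
                      h2 (n + 1) = c n * h2 n + h1 n) ∧
        Summable (fun i => (h2 (i + 1) : ℝ) / ∏ k ∈ Finset.Icc 1 (i + 1), (b k : ℝ)) := by
  have hbpos : ∀ n, 0 < 2 ^ n * (Haux c n).2 := fun n => by
    have := (Haux_pos c n).2
    positivity
  refine ⟨fun n => 2 ^ n * (Haux c n).2, hbpos, fun n => (Haux c n).1, fun n => (Haux c n).2,
    by simp [Haux], by simp [Haux], ?_, ?_⟩
  · intro n hn
    obtain ⟨m, rfl⟩ := Nat.exists_eq_add_of_le hn
    constructor <;> simp [Haux, Nat.add_comm 1 m]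
  · have hb1 : ∀ k, (1 : ℝ) ≤ ((2 ^ k * (Haux c k).2 : ℕ) : ℝ) := fun k => by
      exact_mod_cast hbpos k
    have key : ∀ i, ((Haux c (i + 1)).2 : ℝ) /
        ∏ k ∈ Finset.Icc 1 (i + 1), ((2 ^ k * (Haux c k).2 : ℕ) : ℝ)
        ≤ (1 / 2 : ℝ) ^ (i + 1) := by
      intro i
      have h2pos : (0 : ℝ) < ((Haux c (i + 1)).2 : ℝ) := by
        exact_mod_cast (Haux_pos c (i + 1)).2
      have hmem : i + 1 ∈ Finset.Icc 1 (i + 1) := by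
        simp [Nat.succ_le_succ]
      have hBpos : (0 : ℝ) < ((2 ^ (i + 1) * (Haux c (i + 1)).2 : ℕ) : ℝ) := by
        exact_mod_cast hbpos (i + 1)
      have hprod : ((2 ^ (i + 1) * (Haux c (i + 1)).2 : ℕ) : ℝ) ≤
          ∏ k ∈ Finset.Icc 1 (i + 1), ((2 ^ k * (Haux c k).2 : ℕ) : ℝ) := by
        have hone : (1 : ℝ) ≤ ∏ k ∈ Finset.Icc 1 i, ((2 ^ k * (Haux c k).2 : ℕ) : ℝ) := by
          calc (1 : ℝ) = ∏ k ∈ Finset.Icc 1 i, (1 : ℝ) := by simp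
            _ ≤ ∏ k ∈ Finset.Icc 1 i, ((2 ^ k * (Haux c k).2 : ℕ) : ℝ) :=
              Finset.prod_le_prod (fun k _ => zero_le_one) (fun k _ => hb1 k)
        rw [Finset.prod_Icc_succ_top (Nat.le_add_left 1 i)]
        calc ((2 ^ (i + 1) * (Haux c (i + 1)).2 : ℕ) : ℝ)
            = 1 * ((2 ^ (i + 1) * (Haux c (i + 1)).2 : ℕ) : ℝ) := (one_mul _).symm
          _ ≤ _ := mul_le_mul_of_nonneg_right hone hBpos.le
      calc ((Haux c (i + 1)).2 : ℝ) /
            ∏ k ∈ Finset.Icc 1 (i + 1), ((2 ^ k * (Haux c k).2 : ℕ) : ℝ)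
          ≤ ((Haux c (i + 1)).2 : ℝ) / ((2 ^ (i + 1) * (Haux c (i + 1)).2 : ℕ) : ℝ) :=
            div_le_div_of_nonneg_left h2pos.le hBpos hprod
        _ = (1 / 2 : ℝ) ^ (i + 1) := by
            push_cast
            rw [div_eq_iff (by positivity)]
            have h21 : (1 / 2 : ℝ) ^ (i + 1) * 2 ^ (i + 1) = 1 := by
              rw [← mul_pow]; norm_num
            rw [← mul_assoc, h21, one_mul]
    have hmaj : Summable (fun i : ℕ => (1 / 2 : ℝ) ^ (i + 1)) := by
      have h : Summable (fun i : ℕ => (1 / 2 : ℝ) ^ i) :=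
        summable_geometric_of_lt_one (by norm_num) (by norm_num)
      have h' := h.mul_left (1 / 2 : ℝ)
      refine h'.congr (fun i => ?_)
      rw [pow_succ]; ring
    refine Summable.of_nonneg_of_le (fun i => ?_) (fun i => key i) hmaj
    have h2nn : (0 : ℝ) ≤ ((Haux c (i + 1)).2 : ℝ) := by positivity
    have : (0 : ℝ) ≤ ∏ k ∈ Finset.Icc 1 (i + 1), ((2 ^ k * (Haux c k).2 : ℕ) : ℝ) :=
      Finset.prod_nonneg fun k _ => by positivity
    exact div_nonneg h2nn this
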